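/- For any a > 0, ∫_0^∞ e^{-s²} I₁(a s) ds = (1/a)(e^{a²/4} - 1), where I₁ is the modified Bessel function of the first kind of order 1. -/

import Mathlib

open Real MeasureTheory

/-- The modified Bessel function of the first kind of order 1,
`I₁(x) = ∑_{m=0}^∞ (1/(m!(m+1)!)) (x/2)^{2m+1}`. -/
noncomputable def besselI1 (x : ℝ) : ℝ :=
  ∑' m : ℕ, (1 / (Nat.factorial m * Nat.factorial (m + 1)) : ℝ) * (x / 2) ^ (2 * m + 1)

lemma aux_integrableOn (n : ℕ) :
    IntegrableOn (fun s : ℝ => s ^ n * Real.exp (-s ^ 2)) (Set.Ioi 0) := by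
  have h := integrableOn_rpow_mul_exp_neg_rpow (p := 2) (s := (n : ℝ))
    (lt_of_lt_of_le neg_one_lt_zero (Nat.cast_nonneg n)) two_pos
  refine h.congr_fun (fun x hx => ?_) measurableSet_Ioi
  beta_reduce
  rw [Real.rpow_natCast, Real.rpow_two]

lemma aux_integral (n : ℕ) :
    ∫ s in Set.Ioi (0 : ℝ), s ^ (2 * n + 1) * Real.exp (-s ^ 2)
      = (Nat.factorial n : ℝ) / 2 := by
  have h := integral_rpow_mul_exp_neg_rpow (p := 2) (q := (2 * n + 1 : ℝ))
    two_pos (by have := Nat.cast_nonneg (α := ℝ) n; linarith)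
  have heq : ∫ s in Set.Ioi (0 : ℝ), s ^ (2 * n + 1) * Real.exp (-s ^ 2)
      = ∫ x in Set.Ioi (0 : ℝ), x ^ (2 * (n : ℝ) + 1) * Real.exp (-x ^ (2 : ℝ)) := by
    refine setIntegral_congr_fun measurableSet_Ioi (fun x hx => ?_)
    rw [Real.rpow_two, show (2 * (n : ℝ) + 1) = ((2 * n + 1 : ℕ) : ℝ) by push_cast; ring,
      Real.rpow_natCast]
  rw [heq, h, show (2 * (n : ℝ) + 1 + 1) / 2 = (n : ℝ) + 1 by ring,
    Real.Gamma_nat_eq_factorial]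
  ring

lemma exp_tsum_succ (x : ℝ) :
    ∑' m : ℕ, x ^ (m + 1) / (Nat.factorial (m + 1) : ℝ) = Real.exp x - 1 := by
  have h : Summable fun n : ℕ => x ^ n / (Nat.factorial n : ℝ) :=
    Real.summable_pow_div_factorial x
  have he : Real.exp x = ∑' n : ℕ, x ^ n / (Nat.factorial n : ℝ) := by
    rw [Real.exp_eq_exp_ℝ, NormedSpace.exp_eq_tsum_div]
  rw [he, Summable.tsum_eq_zero_add h]
  simp

theorem stmt2 (a : ℝ) (ha : 0 < a) :
    ∫ s in Set.Ioi (0 : ℝ), Real.exp (-s ^ 2) * besselI1 (a * s)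
      = (1 / a) * (Real.exp (a ^ 2 / 4) - 1) := by
  set F : ℕ → ℝ → ℝ := fun m s =>
    ((1 / (Nat.factorial m * Nat.factorial (m + 1)) : ℝ) * (a / 2) ^ (2 * m + 1)) *
      (s ^ (2 * m + 1) * Real.exp (-s ^ 2)) with hF
  have hFint : ∀ m : ℕ, Integrable (F m) (volume.restrict (Set.Ioi 0)) := fun m =>
    (aux_integrableOn (2 * m + 1)).const_mul _
  have hFval : ∀ m : ℕ, ∫ s in Set.Ioi (0 : ℝ), F m s
      = (1 / a) * ((a ^ 2 / 4) ^ (m + 1) / (Nat.factorial (m + 1) : ℝ)) := by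
    intro m
    rw [hF]
    simp only
    rw [integral_const_mul, aux_integral m]
    have hfm : (Nat.factorial m : ℝ) ≠ 0 := Nat.cast_ne_zero.mpr (Nat.factorial_ne_zero m)
    have hfm1 : (Nat.factorial (m + 1) : ℝ) ≠ 0 := Nat.cast_ne_zero.mpr (Nat.factorial_ne_zero _)
    have hpow : (a / 2) ^ (2 * m + 1) = (a ^ 2 / 4) ^ m * (a / 2) := by
      rw [pow_succ, pow_mul]
      ring_nf
    rw [hpow, pow_succ]
    field_simp
    ring
  have hFnonneg : ∀ m : ℕ, ∀ s ∈ Set.Ioi (0 : ℝ), 0 ≤ F m s := by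
    intro m s hs
    have : (0 : ℝ) < s := hs
    positivity
  have hnorm : ∀ m : ℕ, ∫ s in Set.Ioi (0 : ℝ), ‖F m s‖
      = ∫ s in Set.Ioi (0 : ℝ), F m s := by
    intro m
    refine setIntegral_congr_fun measurableSet_Ioi (fun s hs => ?_)
    exact Real.norm_of_nonneg (hFnonneg m s hs)
  have hsum : Summable fun m : ℕ => ∫ s in Set.Ioi (0 : ℝ), ‖F m s‖ := by
    have h1 : Summable fun m : ℕ =>
        (1 / a) * ((a ^ 2 / 4) ^ (m + 1) / (Nat.factorial (m + 1) : ℝ)) := by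
      refine Summable.mul_left _ ?_
      exact ((Real.summable_pow_div_factorial (a ^ 2 / 4)).comp_injective
        Nat.succ_injective)
    refine h1.congr fun m => ?_
    rw [hnorm m, hFval m]
  have hswap := MeasureTheory.integral_tsum_of_summable_integral_norm hFint hsum
  have hrepr : ∀ s : ℝ, (∑' m : ℕ, F m s) = Real.exp (-s ^ 2) * besselI1 (a * s) := by
    intro s
    rw [besselI1, ← tsum_mul_left]
    refine tsum_congr fun m => ?_
    rw [hF]
    simp only
    rw [show a * s / 2 = (a / 2) * s by ring, mul_pow]
    ring
  have hI : ∫ s in Set.Ioi (0 : ℝ), Real.exp (-s ^ 2) * besselI1 (a * s)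
      = ∑' m : ℕ, ∫ s in Set.Ioi (0 : ℝ), F m s := by
    rw [hswap]
    exact setIntegral_congr_fun measurableSet_Ioi fun s _ => (hrepr s).symm
  rw [hI]
  calc ∑' m : ℕ, ∫ s in Set.Ioi (0 : ℝ), F m s
      = ∑' m : ℕ, (1 / a) * ((a ^ 2 / 4) ^ (m + 1) / (Nat.factorial (m + 1) : ℝ)) :=
        tsum_congr hFval
    _ = (1 / a) * ∑' m : ℕ, (a ^ 2 / 4) ^ (m + 1) / (Nat.factorial (m + 1) : ℝ) :=
        tsum_mul_left
    _ = (1 / a) * (Real.exp (a ^ 2 / 4) - 1) := by rw [exp_tsum_succ]
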